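/- Let ⦀·⦀ be an orthant-monotonic norm on ℝ^d with dual unit sphere S⋆ = {y : ⦀y⦀⋆ = 1}. Then for every k ∈ {1,…,d}: (i) for every x ∈ ℝ^d, the generalized top-k norm satisfies ⦀x⦀^top_k = sup over subsets K ⊆ {1,…,d} with |K| ≤ k of σ_{ℝ_K ∩ S⋆}(x); (ii) the unit ball of the generalized k-support norm equals the closed convex hull of the union, over subsets K ⊆ {1,…,d} with |K| ≤ k, of the sets ℝ_K ∩ S⋆. -/

import Mathlib

open Finset Set

namespace OSMPaper

variable {d : ℕ}

/-- Standard inner product on `ℝ^d = Fin d → ℝ`. -/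
def dot (x y : Fin d → ℝ) : ℝ := ∑ i, x i * y i

/-- `N` is a norm on `ℝ^d`. -/
def IsNorm (N : (Fin d → ℝ) → ℝ) : Prop :=
  (∀ x, 0 ≤ N x) ∧ (∀ x, N x = 0 ↔ x = 0) ∧
  (∀ (c : ℝ) (x : Fin d → ℝ), N (c • x) = |c| * N x) ∧
  (∀ x y, N (x + y) ≤ N x + N y)

/-- `proj K x = x_K`, the vector coinciding with `x` on `K` and zero outside `K`. -/
def proj (K : Finset (Fin d)) (x : Fin d → ℝ) : Fin d → ℝ :=
  fun i => if i ∈ K then x i else 0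

/-- The coordinate subspace `ℝ_K`. -/
def coordSubspace (K : Finset (Fin d)) : Set (Fin d → ℝ) :=
  {x | ∀ j, j ∉ K → x j = 0}

/-- Orthant-monotonic norm. -/
def OrthantMonotonic (N : (Fin d → ℝ) → ℝ) : Prop :=
  ∀ x x' : Fin d → ℝ, (∀ i, |x i| ≤ |x' i|) → (∀ i, 0 ≤ x i * x' i) → N x ≤ N x'

/-- Orthant-strictly monotonic norm. -/
def OrthantStrictlyMonotonic (N : (Fin d → ℝ) → ℝ) : Prop :=
  ∀ x x' : Fin d → ℝ, (∀ i, |x i| ≤ |x' i|) → (∃ j, |x j| < |x' j|) →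
    (∀ i, 0 ≤ x i * x' i) → N x < N x'

/-- Dual norm `⦀y⦀⋆ = sup_{N x ≤ 1} ⟨x, y⟩`. -/
noncomputable def dualNorm (N : (Fin d → ℝ) → ℝ) (y : Fin d → ℝ) : ℝ :=
  sSup {r | ∃ x, N x ≤ 1 ∧ r = dot x y}

/-- Support function of a set `S`. -/
noncomputable def suppFn (S : Set (Fin d → ℝ)) (y : Fin d → ℝ) : ℝ :=
  sSup {r | ∃ x ∈ S, r = dot x y}

/-- Generalized top-`k` norm associated with the source norm `N`. -/
noncomputable def topNorm (N : (Fin d → ℝ) → ℝ) (k : ℕ) (x : Fin d → ℝ) : ℝ :=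
  sSup {r | ∃ K : Finset (Fin d), K.card ≤ k ∧ r = N (proj K x)}

/-- Generalized `k`-support norm: the dual norm of the generalized top-`k` norm. -/
noncomputable def supportNorm (N : (Fin d → ℝ) → ℝ) (k : ℕ) : (Fin d → ℝ) → ℝ :=
  dualNorm (topNorm N k)

/-- The ℓ0 pseudonorm: the number of nonzero components. -/
noncomputable def l0 (x : Fin d → ℝ) : ℕ := Set.ncard {i | x i ≠ 0}

/-- `x` is an extreme point of the convex set `C`. -/
def ExtremePt (C : Set (Fin d → ℝ)) (x : Fin d → ℝ) : Prop :=
  x ∈ C ∧ ∀ y ∈ C, ∀ z ∈ C, ∀ t : ℝ, 0 < t → t < 1 →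
    x = t • y + (1 - t) • z → y = x ∧ z = x

section Aux

variable {N : (Fin d → ℝ) → ℝ}

/-! ### dot product basics -/

lemma dot_comm (x y : Fin d → ℝ) : dot x y = dot y x :=
  Finset.sum_congr rfl fun i _ => mul_comm _ _

lemma dot_zero_left (y : Fin d → ℝ) : dot 0 y = 0 := by simp [dot]

lemma dot_zero_right (x : Fin d → ℝ) : dot x 0 = 0 := by simp [dot]

lemma dot_smul_left (c : ℝ) (x y : Fin d → ℝ) : dot (c • x) y = c * dot x y := by
  simp [dot, Finset.mul_sum, mul_assoc]

lemma dot_smul_right (c : ℝ) (x y : Fin d → ℝ) : dot x (c • y) = c * dot x y := by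
  rw [dot_comm, dot_smul_left, dot_comm]

lemma dot_neg_left (x y : Fin d → ℝ) : dot (-x) y = - dot x y := by
  simp [dot]

lemma dot_neg_right (x y : Fin d → ℝ) : dot x (-y) = - dot x y := by
  rw [dot_comm, dot_neg_left, dot_comm]

/-! ### proj basics -/

lemma proj_mem (K : Finset (Fin d)) (x : Fin d → ℝ) : proj K x ∈ coordSubspace K :=
  fun _ hj => if_neg hj

lemma proj_eq_self {K : Finset (Fin d)} {z : Fin d → ℝ} (hz : z ∈ coordSubspace K) :
    proj K z = z := by
  funext i
  by_cases h : i ∈ K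
  · simp [proj, h]
  · simp [proj, h, hz i h]

lemma proj_smul (K : Finset (Fin d)) (c : ℝ) (x : Fin d → ℝ) :
    proj K (c • x) = c • proj K x := by
  funext i
  by_cases h : i ∈ K <;> simp [proj, h]

lemma dot_proj_right {K : Finset (Fin d)} {v : Fin d → ℝ} (hv : v ∈ coordSubspace K)
    (x : Fin d → ℝ) : dot v (proj K x) = dot v x := by
  refine Finset.sum_congr rfl fun i _ => ?_
  by_cases h : i ∈ K
  · simp [proj, h]
  · simp [hv i h]

lemma dot_proj_swap (K : Finset (Fin d)) (x y : Fin d → ℝ) :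
    dot (proj K x) y = dot x (proj K y) := by
  refine Finset.sum_congr rfl fun i _ => ?_
  by_cases h : i ∈ K <;> simp [proj, h]

/-! ### basis -/

def e (i : Fin d) : Fin d → ℝ := fun j => if i = j then 1 else 0

lemma e_eq_single (i : Fin d) : e i = Pi.single i 1 := by
  funext j
  rw [Pi.single_apply]
  simp [e, eq_comm]

lemma norm_e (i : Fin d) : ‖e i‖ = 1 := by
  rw [e_eq_single, Pi.norm_single]; simp

lemma pi_repr (x : Fin d → ℝ) : x = ∑ i : Fin d, x i • e i := pi_eq_sum_univ x

lemma e_ne_zero (i : Fin d) : e i ≠ 0 := by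
  intro h
  have := norm_e i
  rw [h] at this
  simp at this

lemma dot_e_self (i : Fin d) : dot (e i) (e i) = 1 := by
  simp [dot, e]

/-! ### norm basics -/

lemma N_zero (hN : IsNorm N) : N 0 = 0 := (hN.2.1 0).2 rfl

lemma N_pos (hN : IsNorm N) {x : Fin d → ℝ} (hx : x ≠ 0) : 0 < N x :=
  lt_of_le_of_ne (hN.1 x) fun h => hx ((hN.2.1 x).1 h.symm)

lemma N_sum_le (hN : IsNorm N) {ι : Type*} (s : Finset ι) (f : ι → Fin d → ℝ) :
    N (∑ i ∈ s, f i) ≤ ∑ i ∈ s, N (f i) := by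
  classical
  induction s using Finset.induction with
  | empty => simp [N_zero hN]
  | insert a s h ih =>
    rw [Finset.sum_insert h, Finset.sum_insert h]
    exact (hN.2.2.2 _ _).trans (by linarith)

lemma N_le_norm (hN : IsNorm N) :
    ∃ C : ℝ, 0 ≤ C ∧ ∀ x : Fin d → ℝ, N x ≤ C * ‖x‖ := by
  refine ⟨∑ i : Fin d, N (e i), Finset.sum_nonneg fun i _ => hN.1 _, fun x => ?_⟩
  have h1 : N x ≤ ∑ i : Fin d, N (x i • e i) := by
    conv_lhs => rw [pi_repr x]
    exact N_sum_le hN _ _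
  have h2 : ∀ i : Fin d, N (x i • e i) ≤ ‖x‖ * N (e i) := by
    intro i
    rw [hN.2.2.1]
    exact mul_le_mul_of_nonneg_right
      (by simpa [Real.norm_eq_abs] using norm_le_pi_norm x i) (hN.1 _)
  calc N x ≤ ∑ i : Fin d, N (x i • e i) := h1
    _ ≤ ∑ i : Fin d, ‖x‖ * N (e i) := Finset.sum_le_sum fun i _ => h2 i
    _ = (∑ i : Fin d, N (e i)) * ‖x‖ := by rw [← Finset.mul_sum, mul_comm]

lemma N_continuous (hN : IsNorm N) : Continuous N := by
  obtain ⟨C, hC0, hC⟩ := N_le_norm hN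
  have key : ∀ a b : Fin d → ℝ, N a - N b ≤ C * ‖a - b‖ := by
    intro a b
    have h1 : N a ≤ N b + N (a - b) := by
      have := hN.2.2.2 b (a - b)
      simpa using this
    linarith [hC (a - b)]
  have hlip : LipschitzWith C.toNNReal N := by
    apply LipschitzWith.of_dist_le_mul
    intro a b
    rw [Real.dist_eq, abs_sub_le_iff, Real.coe_toNNReal _ hC0]
    constructor
    · simpa [dist_eq_norm] using key a b
    · have := key b a
      rw [show b - a = -(a-b) by ring, norm_neg] at this
      simpa [dist_eq_norm] using this
  exact hlip.continuous

lemma norm_le_N (hd : 0 < d) (hN : IsNorm N) :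
    ∃ m : ℝ, 0 < m ∧ ∀ x : Fin d → ℝ, m * ‖x‖ ≤ N x := by
  have hnt : Nontrivial (Fin d → ℝ) := by
    have : Nonempty (Fin d) := ⟨⟨0, hd⟩⟩
    infer_instance
  have hne : (Metric.sphere (0 : Fin d → ℝ) 1).Nonempty :=
    NormedSpace.sphere_nonempty.2 zero_le_one
  obtain ⟨x₀, hx₀, hmin⟩ :=
    (isCompact_sphere (0 : Fin d → ℝ) 1).exists_isMinOn hne (N_continuous hN).continuousOn
  have hx₀norm : ‖x₀‖ = 1 := by simpa [dist_eq_norm] using hx₀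
  have hx₀ne : x₀ ≠ 0 := by
    intro h; rw [h] at hx₀norm; simp at hx₀norm
  refine ⟨N x₀, N_pos hN hx₀ne, fun x => ?_⟩
  by_cases hx : x = 0
  · simp [hx, N_zero hN]
  · have hxn : (0:ℝ) < ‖x‖ := norm_pos_iff.2 hx
    have hu : (‖x‖⁻¹ • x) ∈ Metric.sphere (0 : Fin d → ℝ) 1 := by
      simp [Metric.mem_sphere, dist_eq_norm, norm_smul, abs_of_pos (inv_pos.2 hxn),
        inv_mul_cancel₀ hxn.ne']
    have h2 : N x₀ ≤ N (‖x‖⁻¹ • x) := hmin hu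
    rw [hN.2.2.1, abs_of_pos (inv_pos.2 hxn)] at h2
    calc N x₀ * ‖x‖ ≤ (‖x‖⁻¹ * N x) * ‖x‖ := mul_le_mul_of_nonneg_right h2 hxn.le
      _ = N x := by field_simp

/-! ### dual norm basics -/

lemma dualSet_nonempty (hN : IsNorm N) (y : Fin d → ℝ) :
    (0:ℝ) ∈ {r | ∃ x, N x ≤ 1 ∧ r = dot x y} :=
  ⟨0, by rw [N_zero hN]; exact zero_le_one, (dot_zero_left y).symm⟩

lemma dualSet_bddAbove (hd : 0 < d) (hN : IsNorm N) (y : Fin d → ℝ) :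
    BddAbove {r | ∃ x, N x ≤ 1 ∧ r = dot x y} := by
  obtain ⟨m, hm, hml⟩ := norm_le_N hd hN
  refine ⟨m⁻¹ * ∑ i, |y i|, ?_⟩
  rintro r ⟨x, hx, rfl⟩
  have h3 : ‖x‖ ≤ m⁻¹ := by
    have h := (hml x).trans hx
    calc ‖x‖ = m⁻¹ * (m * ‖x‖) := by field_simp
      _ ≤ m⁻¹ * 1 := mul_le_mul_of_nonneg_left h (inv_pos.2 hm).le
      _ = m⁻¹ := mul_one _
  calc dot x y ≤ ∑ i, |x i| * |y i| := Finset.sum_le_sum fun i _ => by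
        calc x i * y i ≤ |x i * y i| := le_abs_self _
          _ = |x i| * |y i| := abs_mul _ _
    _ ≤ ∑ i, ‖x‖ * |y i| := Finset.sum_le_sum fun i _ =>
        mul_le_mul_of_nonneg_right
          (by simpa [Real.norm_eq_abs] using norm_le_pi_norm x i) (abs_nonneg _)
    _ = ‖x‖ * ∑ i, |y i| := by rw [Finset.mul_sum]
    _ ≤ m⁻¹ * ∑ i, |y i| := mul_le_mul_of_nonneg_right h3
        (Finset.sum_nonneg fun i _ => abs_nonneg _)

lemma dualNorm_nonneg (hd : 0 < d) (hN : IsNorm N) (y : Fin d → ℝ) :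
    0 ≤ dualNorm N y :=
  le_csSup (dualSet_bddAbove hd hN y) (dualSet_nonempty hN y)

lemma dot_le_mul (hd : 0 < d) (hN : IsNorm N) (x y : Fin d → ℝ) :
    dot x y ≤ N x * dualNorm N y := by
  by_cases hx : x = 0
  · simp [hx, dot_zero_left, N_zero hN]
  · have hNx : 0 < N x := N_pos hN hx
    have hmem : dot ((N x)⁻¹ • x) y ∈ {r | ∃ x, N x ≤ 1 ∧ r = dot x y} :=
      ⟨(N x)⁻¹ • x, by
        rw [hN.2.2.1, abs_of_pos (inv_pos.2 hNx), inv_mul_cancel₀ hNx.ne'], rfl⟩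
    have h := le_csSup (dualSet_bddAbove hd hN y) hmem
    rw [dot_smul_left] at h
    calc dot x y = N x * ((N x)⁻¹ * dot x y) := by field_simp
      _ ≤ N x * dualNorm N y := mul_le_mul_of_nonneg_left h hNx.le

lemma dualNorm_zero (hN : IsNorm N) : dualNorm N (0 : Fin d → ℝ) = 0 := by
  unfold dualNorm
  have h : {r | ∃ x, N x ≤ 1 ∧ r = dot x (0 : Fin d → ℝ)} = {0} := by
    ext r
    simp only [Set.mem_setOf_eq, Set.mem_singleton_iff, dot_zero_right]
    constructor
    · rintro ⟨x, _, rfl⟩; rfl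
    · rintro rfl; exact ⟨0, by rw [N_zero hN]; exact zero_le_one, rfl⟩
  rw [h, csSup_singleton]

lemma N_neg (hN : IsNorm N) (x : Fin d → ℝ) : N (-x) = N x := by
  have := hN.2.2.1 (-1) x
  simpa using this

lemma dualNorm_smul (hd : 0 < d) (hN : IsNorm N) {c : ℝ} (hc : 0 ≤ c) (y : Fin d → ℝ) :
    dualNorm N (c • y) = c * dualNorm N y := by
  rcases hc.eq_or_lt with h | hcpos
  · rw [← h]; simp [dualNorm_zero hN]
  apply le_antisymm
  · apply Real.sSup_le _ (mul_nonneg hcpos.le (dualNorm_nonneg hd hN y))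
    rintro r ⟨x, hx, rfl⟩
    rw [dot_smul_right]
    exact mul_le_mul_of_nonneg_left (le_csSup (dualSet_bddAbove hd hN y) ⟨x, hx, rfl⟩) hcpos.le
  · have h1 : dualNorm N y ≤ c⁻¹ * dualNorm N (c • y) := by
      apply Real.sSup_le _ (mul_nonneg (inv_pos.2 hcpos).le (dualNorm_nonneg hd hN (c • y)))
      rintro r ⟨x, hx, rfl⟩
      have h2 : dot x (c • y) ≤ dualNorm N (c • y) :=
        le_csSup (dualSet_bddAbove hd hN (c • y)) ⟨x, hx, rfl⟩
      rw [dot_smul_right] at h2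
      calc dot x y = c⁻¹ * (c * dot x y) := by field_simp
        _ ≤ c⁻¹ * dualNorm N (c • y) := mul_le_mul_of_nonneg_left h2 (inv_pos.2 hcpos).le
    calc c * dualNorm N y ≤ c * (c⁻¹ * dualNorm N (c • y)) :=
          mul_le_mul_of_nonneg_left h1 hcpos.le
      _ = dualNorm N (c • y) := by field_simp

lemma dualNorm_neg (hN : IsNorm N) (y : Fin d → ℝ) :
    dualNorm N (-y) = dualNorm N y := by
  unfold dualNorm
  congr 1
  ext r
  constructor
  · rintro ⟨x, hx, rfl⟩
    exact ⟨-x, by rw [N_neg hN]; exact hx, by simp [dot_neg_left, dot_neg_right]⟩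
  · rintro ⟨x, hx, rfl⟩
    exact ⟨-x, by rw [N_neg hN]; exact hx, by simp [dot_neg_left, dot_neg_right]⟩

lemma N_proj_le (hom : OrthantMonotonic N) (K : Finset (Fin d))
    (x : Fin d → ℝ) : N (proj K x) ≤ N x := by
  apply hom
  · intro i
    by_cases h : i ∈ K <;> simp [proj, h, abs_nonneg]
  · intro i
    by_cases h : i ∈ K <;> simp [proj, h, mul_self_nonneg]

lemma dualNorm_proj_le (hd : 0 < d) (hN : IsNorm N) (hom : OrthantMonotonic N)
    (K : Finset (Fin d)) (y : Fin d → ℝ) :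
    dualNorm N (proj K y) ≤ dualNorm N y := by
  apply Real.sSup_le _ (dualNorm_nonneg hd hN y)
  rintro r ⟨x, hx, rfl⟩
  rw [← dot_proj_swap]
  exact le_csSup (dualSet_bddAbove hd hN y)
    ⟨proj K x, (N_proj_le hom K x).trans hx, rfl⟩

lemma clm_eq_dot (f : (Fin d → ℝ) →L[ℝ] ℝ) (v : Fin d → ℝ) :
    f v = dot (fun i => f (e i)) v := by
  conv_lhs => rw [pi_repr v]
  rw [map_sum]
  refine Finset.sum_congr rfl fun i _ => ?_
  rw [map_smul]
  simp [mul_comm]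

lemma bidual (hd : 0 < d) (hN : IsNorm N) (z : Fin d → ℝ) (s : ℝ) (hs : s < N z) :
    ∃ y, dualNorm N y ≤ 1 ∧ s < dot z y := by
  by_cases hs0 : s < 0
  · exact ⟨0, by rw [dualNorm_zero hN]; exact zero_le_one, by rwa [dot_zero_right]⟩
  push_neg at hs0
  set s' := (s + N z) / 2 with hs'
  have hs'pos : 0 < s' := by simp only [hs']; linarith
  have h1 : s < s' := by simp only [hs']; linarith
  have h2 : s' < N z := by simp only [hs']; linarith
  set w := s'⁻¹ • z with hw
  have hwN : 1 < N w := by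
    rw [hw, hN.2.2.1, abs_of_pos (inv_pos.2 hs'pos)]
    have h3 := mul_lt_mul_of_pos_left h2 (inv_pos.2 hs'pos)
    rwa [inv_mul_cancel₀ hs'pos.ne'] at h3
  have hBconv : Convex ℝ {x : Fin d → ℝ | N x ≤ 1} := by
    intro a ha b hb ta tb hta htb hab
    simp only [Set.mem_setOf_eq] at ha hb ⊢
    calc N (ta • a + tb • b) ≤ N (ta • a) + N (tb • b) := hN.2.2.2 _ _
      _ = ta * N a + tb * N b := by
          rw [hN.2.2.1, hN.2.2.1, abs_of_nonneg hta, abs_of_nonneg htb]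
      _ ≤ ta * 1 + tb * 1 := add_le_add
          (mul_le_mul_of_nonneg_left ha hta) (mul_le_mul_of_nonneg_left hb htb)
      _ = 1 := by rw [mul_one, mul_one, hab]
  have hBclosed : IsClosed {x : Fin d → ℝ | N x ≤ 1} :=
    isClosed_le (N_continuous hN) continuous_const
  have hwB : w ∉ {x : Fin d → ℝ | N x ≤ 1} := fun h => absurd h (not_le.2 hwN)
  obtain ⟨f, u, hfb, hfw⟩ := geometric_hahn_banach_closed_point hBconv hBclosed hwB
  set x₀ : Fin d → ℝ := fun i => f (e i) with hx₀
  have hfd : ∀ v, f v = dot x₀ v := fun v => clm_eq_dot f v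
  have hu0 : 0 < u := by
    have h0 : (0 : Fin d → ℝ) ∈ {x : Fin d → ℝ | N x ≤ 1} := by
      simp only [Set.mem_setOf_eq, N_zero hN]; exact zero_le_one
    have := hfb 0 h0
    simpa using this
  have hdx : dualNorm N x₀ ≤ u := by
    apply Real.sSup_le _ hu0.le
    rintro r ⟨x, hx, rfl⟩
    rw [dot_comm, ← hfd]
    exact (hfb x hx).le
  refine ⟨u⁻¹ • x₀, ?_, ?_⟩
  · rw [dualNorm_smul hd hN (inv_pos.2 hu0).le]
    calc u⁻¹ * dualNorm N x₀ ≤ u⁻¹ * u :=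
          mul_le_mul_of_nonneg_left hdx (inv_pos.2 hu0).le
      _ = 1 := inv_mul_cancel₀ hu0.ne'
  · rw [dot_smul_right]
    have hzx : dot z x₀ = s' * f w := by
      rw [hfd w, hw, dot_smul_right, dot_comm]
      field_simp
    rw [hzx]
    calc s < s' := h1
      _ = u⁻¹ * (s' * u) := by field_simp
      _ < u⁻¹ * (s' * f w) := by
          apply mul_lt_mul_of_pos_left _ (inv_pos.2 hu0)
          exact mul_lt_mul_of_pos_left hfw hs'pos

lemma key_eq (hd : 0 < d) (hN : IsNorm N) (hom : OrthantMonotonic N)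
    (K : Finset (Fin d)) (x : Fin d → ℝ) :
    N (proj K x) = suppFn (coordSubspace K ∩ {y | dualNorm N y = 1}) x := by
  set z := proj K x with hzdef
  have hzK : z ∈ coordSubspace K := proj_mem K x
  set A := coordSubspace K ∩ {y | dualNorm N y = 1} with hA
  have hsets : {r | ∃ v ∈ A, r = dot v x} = {r | ∃ v ∈ A, r = dot v z} := by
    ext r
    exact ⟨fun ⟨v, hv, h⟩ => ⟨v, hv, by rw [h, ← dot_proj_right hv.1 x]⟩,
           fun ⟨v, hv, h⟩ => ⟨v, hv, by rw [h, dot_proj_right hv.1 x]⟩⟩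
  unfold suppFn
  rw [hsets]
  have hbdd : BddAbove {r | ∃ v ∈ A, r = dot v z} := by
    refine ⟨N z, ?_⟩
    rintro r ⟨v, hv, rfl⟩
    have h := dot_le_mul hd hN z v
    rw [hv.2, mul_one] at h
    rw [dot_comm]
    exact h
  by_cases hz0 : z = 0
  · rw [hz0, N_zero hN]
    have hsub : {r | ∃ v ∈ A, r = dot v (0 : Fin d → ℝ)} ⊆ {0} := by
      rintro r ⟨v, hv, rfl⟩
      simp [dot_zero_right]
    rcases Set.subset_singleton_iff_eq.1 hsub with h | h
    · rw [h, Real.sSup_empty]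
    · rw [h, csSup_singleton]
  · apply le_antisymm
    · by_contra hcon
      push_neg at hcon
      have hNz : 0 < N z := N_pos hN hz0
      set S := sSup {r | ∃ v ∈ A, r = dot v z} with hS
      have hmax : max S 0 < N z := max_lt hcon hNz
      obtain ⟨y, hy1, hy2⟩ := bidual hd hN z (max S 0) hmax
      set w := proj K y with hwdef
      have hdzw : dot z w = dot z y := by
        rw [hwdef, ← dot_proj_swap, proj_eq_self hzK]
      have hzy_pos : 0 < dot z y := lt_of_le_of_lt (le_max_right S 0) hy2
      have ht1 : dualNorm N w ≤ 1 := (dualNorm_proj_le hd hN hom K y).trans hy1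
      have htpos : 0 < dualNorm N w := by
        rcases (dualNorm_nonneg hd hN w).lt_or_eq with h | h
        · exact h
        · exfalso
          have hle := dot_le_mul hd hN z w
          rw [hdzw, ← h, mul_zero] at hle
          exact absurd hle (not_le.2 hzy_pos)
      set t := dualNorm N w with htdef
      have hw' : dualNorm N (t⁻¹ • w) = 1 := by
        rw [dualNorm_smul hd hN (inv_pos.2 htpos).le, inv_mul_cancel₀ htpos.ne']
      have hmemA : t⁻¹ • w ∈ A :=
        ⟨fun j hj => by simp [hwdef, proj, hj], hw'⟩
      have hle := le_csSup hbdd (⟨t⁻¹ • w, hmemA, rfl⟩ :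
        dot (t⁻¹ • w) z ∈ {r | ∃ v ∈ A, r = dot v z})
      have hval : dot (t⁻¹ • w) z = t⁻¹ * dot z y := by
        rw [dot_smul_left, dot_comm w z, hdzw]
      have hinv1 : (1:ℝ) ≤ t⁻¹ := by
        nlinarith [inv_mul_cancel₀ htpos.ne', inv_pos.2 htpos]
      have hbig : S < dot (t⁻¹ • w) z := by
        rw [hval]
        have hgr : S < dot z y := lt_of_le_of_lt (le_max_left S 0) hy2
        nlinarith
      exact absurd hle (not_le.2 hbig)
    · apply Real.sSup_le _ (hN.1 z)
      rintro r ⟨v, hv, rfl⟩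
      have h := dot_le_mul hd hN z v
      rw [hv.2, mul_one] at h
      rw [dot_comm]
      exact h

/-! ### topNorm basics -/

lemma proj_empty (x : Fin d → ℝ) : proj (∅ : Finset (Fin d)) x = 0 := by
  funext i; simp [proj]

lemma topSet_bddAbove (x : Fin d → ℝ) (k : ℕ) :
    BddAbove {r | ∃ K : Finset (Fin d), K.card ≤ k ∧ r = N (proj K x)} := by
  apply Set.Finite.bddAbove
  apply Set.Finite.subset (Set.finite_range fun K : Finset (Fin d) => N (proj K x))
  rintro r ⟨K, _, rfl⟩
  exact ⟨K, rfl⟩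

lemma le_topNorm {k : ℕ} {K : Finset (Fin d)} (hK : K.card ≤ k) (x : Fin d → ℝ) :
    N (proj K x) ≤ topNorm N k x :=
  le_csSup (topSet_bddAbove x k) ⟨K, hK, rfl⟩

lemma topNorm_nonneg (hN : IsNorm N) (k : ℕ) (x : Fin d → ℝ) :
    0 ≤ topNorm N k x := by
  have h := le_topNorm (N := N) (k := k) (K := (∅ : Finset (Fin d))) (by simp) x
  rwa [proj_empty, N_zero hN] at h

lemma topNorm_pos (hN : IsNorm N) {k : ℕ} (hk1 : 1 ≤ k) {x : Fin d → ℝ} (hx : x ≠ 0) :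
    0 < topNorm N k x := by
  obtain ⟨i, hi⟩ := Function.ne_iff.1 hx
  have hpne : proj {i} x ≠ 0 := by
    intro h
    have := congrFun h i
    simp [proj] at this
    exact hi this
  exact lt_of_lt_of_le (N_pos hN hpne) (le_topNorm (by simpa using hk1) x)

lemma topNorm_smul_le (hN : IsNorm N) {k : ℕ} {c : ℝ} (hc : 0 ≤ c) (x : Fin d → ℝ) :
    topNorm N k (c • x) ≤ c * topNorm N k x := by
  apply Real.sSup_le _ (mul_nonneg hc (topNorm_nonneg hN k x))
  rintro r ⟨K, hK, rfl⟩
  rw [proj_smul, hN.2.2.1, abs_of_nonneg hc]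
  exact mul_le_mul_of_nonneg_left (le_topNorm hK x) hc

lemma suppSet_bddAbove_top (hd : 0 < d) (hN : IsNorm N) {k : ℕ} (hk1 : 1 ≤ k)
    (y : Fin d → ℝ) :
    BddAbove {r | ∃ x, topNorm N k x ≤ 1 ∧ r = dot x y} := by
  obtain ⟨m, hm, hml⟩ := norm_le_N hd hN
  refine ⟨m⁻¹ * ∑ i, |y i|, ?_⟩
  rintro r ⟨x, hx, rfl⟩
  have hxi : ∀ i, |x i| ≤ m⁻¹ := by
    intro i
    have h2 : |x i| ≤ ‖proj {i} x‖ := by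
      have h := norm_le_pi_norm (proj {i} x) i
      simpa [proj, Real.norm_eq_abs] using h
    have h1 : m * |x i| ≤ N (proj {i} x) := by
      calc m * |x i| ≤ m * ‖proj {i} x‖ := mul_le_mul_of_nonneg_left h2 hm.le
        _ ≤ N (proj {i} x) := hml _
    have h3 : N (proj {i} x) ≤ topNorm N k x := le_topNorm (by simpa using hk1) x
    have h4 : m * |x i| ≤ 1 := (h1.trans h3).trans hx
    calc |x i| = m⁻¹ * (m * |x i|) := by field_simp
      _ ≤ m⁻¹ * 1 := mul_le_mul_of_nonneg_left h4 (inv_pos.2 hm).le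
      _ = m⁻¹ := mul_one _
  calc dot x y ≤ ∑ i, |x i| * |y i| := Finset.sum_le_sum fun i _ => by
        calc x i * y i ≤ |x i * y i| := le_abs_self _
          _ = |x i| * |y i| := abs_mul _ _
    _ ≤ ∑ i, m⁻¹ * |y i| := Finset.sum_le_sum fun i _ =>
        mul_le_mul_of_nonneg_right (hxi i) (abs_nonneg _)
    _ = m⁻¹ * ∑ i, |y i| := by rw [Finset.mul_sum]

lemma supportBall (hd : 0 < d) (hN : IsNorm N) {k : ℕ} (hk1 : 1 ≤ k) (y : Fin d → ℝ) :
    supportNorm N k y ≤ 1 ↔ ∀ x, dot x y ≤ topNorm N k x := by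
  constructor
  · intro h x
    by_cases hx : x = 0
    · rw [hx, dot_zero_left]
      exact topNorm_nonneg hN k 0
    · have hM : 0 < topNorm N k x := topNorm_pos hN hk1 hx
      set M := topNorm N k x with hMdef
      have h1 : topNorm N k (M⁻¹ • x) ≤ 1 :=
        (topNorm_smul_le hN (inv_pos.2 hM).le x).trans
          (le_of_eq (inv_mul_cancel₀ hM.ne'))
      have h2 : dot (M⁻¹ • x) y ≤ supportNorm N k y :=
        le_csSup (suppSet_bddAbove_top hd hN hk1 y) ⟨_, h1, rfl⟩
      rw [dot_smul_left] at h2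
      calc dot x y = M * (M⁻¹ * dot x y) := by field_simp
        _ ≤ M * 1 := mul_le_mul_of_nonneg_left (h2.trans h) hM.le
        _ = M := mul_one M
  · intro h
    apply Real.sSup_le _ zero_le_one
    rintro r ⟨x, hx, rfl⟩
    exact (h x).trans hx

end Aux

/-- for an orthant-monotonic source norm, (i) the generalized
top-k norm equals the sup over `|K| ≤ k` of the support functions of
`ℝ_K ∩ S⋆`, and (ii) the unit ball of the generalized k-support norm is the
closed convex hull of the union of the sets `ℝ_K ∩ S⋆` over `|K| ≤ k`. -/
theorem topNorm_and_supportNorm_of_orthantMonotonic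
    (hd : 0 < d) (N : (Fin d → ℝ) → ℝ) (hN : IsNorm N)
    (hom : OrthantMonotonic N) (k : ℕ) (hk1 : 1 ≤ k) (hkd : k ≤ d) :
    (∀ x : Fin d → ℝ,
      topNorm N k x =
        sSup {r | ∃ K : Finset (Fin d), K.card ≤ k ∧
          r = suppFn (coordSubspace K ∩ {y | dualNorm N y = 1}) x}) ∧
    {y : Fin d → ℝ | supportNorm N k y ≤ 1} =
      closure (convexHull ℝ
        (⋃ (K : Finset (Fin d)) (_ : K.card ≤ k),
          coordSubspace K ∩ {y : Fin d → ℝ | dualNorm N y = 1})) := by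
  constructor
  · -- part (i)
    intro x
    unfold topNorm
    congr 1
    ext r
    constructor
    · rintro ⟨K, hK, rfl⟩
      exact ⟨K, hK, key_eq hd hN hom K x⟩
    · rintro ⟨K, hK, rfl⟩
      exact ⟨K, hK, (key_eq hd hN hom K x).symm⟩
  · -- part (ii)
    set A : Set (Fin d → ℝ) :=
      ⋃ (K : Finset (Fin d)) (_ : K.card ≤ k),
        coordSubspace K ∩ {y : Fin d → ℝ | dualNorm N y = 1} with hAdef
    have hmemA : ∀ v : Fin d → ℝ, v ∈ A ↔
        ∃ K : Finset (Fin d), K.card ≤ k ∧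
          v ∈ coordSubspace K ∩ {y | dualNorm N y = 1} := by
      intro v
      rw [hAdef]
      simp only [Set.mem_iUnion]
      exact ⟨fun ⟨K, hK, hv⟩ => ⟨K, hK, hv⟩, fun ⟨K, hK, hv⟩ => ⟨K, hK, hv⟩⟩
    -- A is symmetric
    have hAsym : ∀ v ∈ A, -v ∈ A := by
      intro v hv
      obtain ⟨K, hK, hv1, hv2⟩ := (hmemA v).1 hv
      refine (hmemA (-v)).2 ⟨K, hK, fun j hj => by simp [hv1 j hj], ?_⟩
      simp only [Set.mem_setOf_eq] at hv2 ⊢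
      rw [dualNorm_neg hN, hv2]
    -- A is nonempty
    have hAne : A.Nonempty := by
      set i : Fin d := ⟨0, hd⟩
      have hdpos : 0 < dualNorm N (e i) := by
        have hNe : 0 < N (e i) := N_pos hN (e_ne_zero i)
        have hmem : dot ((N (e i))⁻¹ • e i) (e i) ∈
            {r | ∃ x, N x ≤ 1 ∧ r = dot x (e i)} :=
          ⟨_, by rw [hN.2.2.1, abs_of_pos (inv_pos.2 hNe), inv_mul_cancel₀ hNe.ne'], rfl⟩
        have h := le_csSup (dualSet_bddAbove hd hN (e i)) hmem
        rw [dot_smul_left, dot_e_self, mul_one] at h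
        exact lt_of_lt_of_le (inv_pos.2 hNe) h
      refine ⟨(dualNorm N (e i))⁻¹ • e i, (hmemA _).2 ⟨{i}, by simpa using hk1, ?_, ?_⟩⟩
      · intro j hj
        simp only [Finset.mem_singleton] at hj
        simp [e, Ne.symm hj]
      · simp only [Set.mem_setOf_eq]
        rw [dualNorm_smul hd hN (inv_pos.2 hdpos).le, inv_mul_cancel₀ hdpos.ne']
    obtain ⟨v₀, hv₀⟩ := hAne
    -- elements of A are bounded by topNorm
    have hAdot : ∀ v ∈ A, ∀ x, dot v x ≤ topNorm N k x := by
      intro v hv x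
      obtain ⟨K, hK, hv1, hv2⟩ := (hmemA v).1 hv
      calc dot v x = dot v (proj K x) := (dot_proj_right hv1 x).symm
        _ = dot (proj K x) v := dot_comm _ _
        _ ≤ N (proj K x) * dualNorm N v := dot_le_mul hd hN _ _
        _ = N (proj K x) := by rw [hv2, mul_one]
        _ ≤ topNorm N k x := le_topNorm hK x
    have hSAbdd : ∀ x, BddAbove {r | ∃ v ∈ A, r = dot v x} := by
      intro x
      refine ⟨topNorm N k x, ?_⟩
      rintro r ⟨v, hv, rfl⟩
      exact hAdot v hv x
    have hSAne : ∀ x, {r | ∃ v ∈ A, r = dot v x}.Nonempty :=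
      fun x => ⟨dot v₀ x, v₀, hv₀, rfl⟩
    have hsupp_nonneg : ∀ x, 0 ≤ suppFn A x := by
      intro x
      have h1 : dot v₀ x ≤ suppFn A x := le_csSup (hSAbdd x) ⟨v₀, hv₀, rfl⟩
      have h2 : dot (-v₀) x ≤ suppFn A x := le_csSup (hSAbdd x) ⟨-v₀, hAsym v₀ hv₀, rfl⟩
      rw [dot_neg_left] at h2
      linarith
    -- topNorm equals the support function of A
    have htop_eq : ∀ x, topNorm N k x = suppFn A x := by
      intro x
      apply le_antisymm
      · apply Real.sSup_le _ (hsupp_nonneg x)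
        rintro r ⟨K, hK, rfl⟩
        rw [key_eq hd hN hom K x]
        apply Real.sSup_le _ (hsupp_nonneg x)
        rintro r ⟨v, hv, rfl⟩
        exact le_csSup (hSAbdd x) ⟨v, (hmemA v).2 ⟨K, hK, hv⟩, rfl⟩
      · apply csSup_le (hSAne x)
        rintro r ⟨v, hv, rfl⟩
        exact hAdot v hv x
    -- conclude
    ext y
    rw [Set.mem_setOf_eq, supportBall hd hN hk1 y]
    constructor
    · intro hy
      by_contra hnot
      have hconv : Convex ℝ (closure (convexHull ℝ A)) :=
        (convex_convexHull ℝ A).closure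
      obtain ⟨f, u, hfa, hfy⟩ :=
        geometric_hahn_banach_closed_point hconv isClosed_closure hnot
      set x₀ : Fin d → ℝ := fun i => f (e i) with hx₀
      have hfd : ∀ v, f v = dot x₀ v := fun v => clm_eq_dot f v
      have hzero_mem : (0 : Fin d → ℝ) ∈ closure (convexHull ℝ A) := by
        apply subset_closure
        have h1 : v₀ ∈ convexHull ℝ A := subset_convexHull ℝ A hv₀
        have h2 : -v₀ ∈ convexHull ℝ A := subset_convexHull ℝ A (hAsym v₀ hv₀)
        have h3 := (convex_convexHull ℝ A) h1 h2
          (by norm_num : (0:ℝ) ≤ 1/2) (by norm_num : (0:ℝ) ≤ 1/2) (by norm_num)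
        simpa using h3
      have hu0 : 0 < u := by
        have := hfa 0 hzero_mem
        simpa using this
      have hsle : suppFn A x₀ ≤ u := by
        apply Real.sSup_le _ hu0.le
        rintro r ⟨v, hv, rfl⟩
        rw [dot_comm, ← hfd]
        exact (hfa v (subset_closure (subset_convexHull ℝ A hv))).le
      have hcontr : dot x₀ y ≤ u := (hy x₀).trans ((htop_eq x₀).trans_le hsle)
      rw [← hfd] at hcontr
      exact absurd hfy (not_lt.2 hcontr)
    · intro hy x
      have hCclosed : IsClosed {w : Fin d → ℝ | dot x w ≤ topNorm N k x} := by
        apply isClosed_le _ continuous_const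
        exact continuous_finset_sum _ fun i _ => continuous_const.mul (continuous_apply i)
      have hCconvex : Convex ℝ {w : Fin d → ℝ | dot x w ≤ topNorm N k x} := by
        apply convex_halfSpace_le
        constructor
        · intro a b
          simp [dot, mul_add, Finset.sum_add_distrib]
        · intro c a
          rw [smul_eq_mul, dot_smul_right]
      have hsub : A ⊆ {w : Fin d → ℝ | dot x w ≤ topNorm N k x} := by
        intro v hv
        rw [Set.mem_setOf_eq, dot_comm]
        exact hAdot v hv x
      exact closure_minimal (convexHull_min hsub hCconvex) hCclosed hy






end OSMPaper
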